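/- Let U^2 be a special square generated by a layer of a pyramid P(F,F') of runs with period p. Define i as the smallest position of U^2 with per(U^2[0..i]) > p and j as the largest position with per(U^2[j..|U^2|)) > p. Then j < |U| ≤ i, and the triple (i - j - 1, U^2[i-p..i-1], U^2[j+1..j+p]) equals the type (|F ∩ F'|, last p characters of F, first p characters of F') of the pyramid. Consequently, the sets of special squares generated by two pyramids of different types are disjoint. -/

import Mathlib

open List

variable {α : Type*}

/-- `frag T a b` is the fragment `T[a..b]` (inclusive, 0-based). -/
def frag (T : List α) (a b : ℕ) : List α := (T.drop a).take (b + 1 - a)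

/-- `p` is a period of `S`: `0 < p ≤ |S|` and `S[i] = S[i+p]` for all valid `i`. -/
def IsPeriodOf (p : ℕ) (S : List α) : Prop :=
  0 < p ∧ p ≤ S.length ∧ ∀ i : ℕ, i + p < S.length → S[i]? = S[i + p]?

/-- The smallest period of `S`. -/
noncomputable def minPeriod (S : List α) : ℕ := sInf {p | IsPeriodOf p S}

/-- `T[a..b]` is a run: periodic (its smallest period occurs at least twice)
and maximal on both sides. -/
def IsRun (T : List α) (a b : ℕ) : Prop :=
  a ≤ b ∧ b < T.length ∧
  2 * minPeriod (frag T a b) ≤ b + 1 - a ∧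
  (a = 0 ∨ T[a - 1]? ≠ T[a - 1 + minPeriod (frag T a b)]?) ∧
  (b = T.length - 1 ∨ T[b + 1]? ≠ T[b + 1 - minPeriod (frag T a b)]?)

/-- `W` occurs in `T` at position `s`. -/
def OccursAt (T : List α) (s : ℕ) (W : List α) : Prop :=
  s + W.length ≤ T.length ∧ (T.drop s).take W.length = W

/-- The set of distinct square substrings of `T`. -/
def Squares (T : List α) : Set (List α) :=
  {W | ∃ X : List α, X ≠ [] ∧ W = X ++ X ∧ W <:+: T}

/-- A non-empty string is primitive if it is not a proper power. -/
def Primitive (U : List α) : Prop :=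
  U ≠ [] ∧ ∀ (V : List α) (k : ℕ), U = (List.replicate k V).flatten → k = 1

/-- Cyclic rotation moving the first `c` characters to the end. -/
def rot (c : ℕ) (L : List α) : List α := L.drop c ++ L.take c

/-- `lam` is the Lyndon root of a periodic string `S`: the lexicographically
smallest rotation of `S[0..per(S))`. -/
def LyndonRootOf [LinearOrder α] (S lam : List α) : Prop :=
  (∃ c < minPeriod S, lam = rot c (S.take (minPeriod S))) ∧
  ∀ c < minPeriod S, lam ≤ rot c (S.take (minPeriod S))

/-- Squares generated by a periodic string `U`: squares contained in `U`
whose smallest period equals that of `U`. -/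
def FragSquares (U : List α) : Set (List α) :=
  {W | ∃ X : List α, X ≠ [] ∧ W = X ++ X ∧ W <:+: U ∧ minPeriod W = minPeriod U}

/-- `subper U`: the minimum of `per(X)` over squares `X²` generated by `U`. -/
noncomputable def subper (U : List α) : ℕ :=
  sInf {q | ∃ X : List α, X ≠ [] ∧ (X ++ X) <:+: U ∧
    minPeriod (X ++ X) = minPeriod U ∧ minPeriod X = q}

/-- Fragments `[a..b]` and `[a'..b']` are neighboring:
`[a-1..b+1] ∩ [a'..b'] ≠ ∅`. -/
def Neighboring (a b a' b' : ℕ) : Prop := a ≤ b' + 1 ∧ a' ≤ b + 1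

/-- `T[x..y]` is a layer of the pyramid of the neighboring runs
`F = T[a..b]` and `F' = T[a'..b']` (with `a < a'`): a subperiodic run `R`
with `subper(R) = per(F)` such that `R ∩ (F ∪ F')` is periodic with
period `per(R)`. -/
def IsLayer (T : List α) (a b a' b' x y : ℕ) : Prop :=
  IsRun T x y ∧
  4 * subper (frag T x y) ≤ minPeriod (frag T x y) ∧
  subper (frag T x y) = minPeriod (frag T a b) ∧
  2 * minPeriod (frag T x y) ≤ min y b' + 1 - max x a ∧
  IsPeriodOf (minPeriod (frag T x y)) (frag T (max x a) (min y b'))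

/-- A `τ`-synchronizing set of `T` (Kempa–Kociumaka): consistency and density. -/
def SyncSet (T : List α) (τ : ℕ) (S : Set ℕ) : Prop :=
  (∀ i ∈ S, i + 2 * τ ≤ T.length) ∧
  (∀ i j : ℕ, i + 2 * τ ≤ T.length → j + 2 * τ ≤ T.length →
    (T.drop i).take (2 * τ) = (T.drop j).take (2 * τ) → (i ∈ S ↔ j ∈ S)) ∧
  (∀ i : ℕ, i + 3 * τ - 1 ≤ T.length →
    ((∀ k ∈ S, k < i ∨ i + τ ≤ k) ↔
      3 * minPeriod ((T.drop i).take (3 * τ - 1)) ≤ τ))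

section Aux

/-- Period condition on the (inclusive) window `[l, r]` of `T`. -/
def PerOn (T : List α) (l r q : ℕ) : Prop :=
  ∀ t, l ≤ t → t + q ≤ r → T[t]? = T[t + q]?

lemma perOn_mono {T : List α} {l r l' r' q : ℕ} (h : PerOn T l r q)
    (hl : l ≤ l') (hr : r' ≤ r) : PerOn T l' r' q :=
  fun t ht htr => h t (hl.trans ht) (htr.trans hr)

lemma perOn_chain {T : List α} {l r q : ℕ} (h : PerOn T l r q) :
    ∀ k t, l ≤ t → t + k * q ≤ r → T[t]? = T[t + k * q]? := by
  intro k
  induction k with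
  | zero => intro t _ _; simp
  | succ k ih =>
    intro t ht htr
    have e : t + (k + 1) * q = (t + q) + k * q := by ring
    rw [e] at htr ⊢
    have h1 : T[t]? = T[t + q]? := h t ht (le_trans (Nat.le_add_right _ _) htr)
    rw [h1]
    exact ih (t + q) (le_trans ht (Nat.le_add_right _ _)) htr

lemma perOn_eq_of {T : List α} {l r q : ℕ} (h : PerOn T l r q) {t t' : ℕ}
    (ht : l ≤ t) (htt' : t ≤ t') (ht' : t' ≤ r) (hd : q ∣ t' - t) :
    T[t]? = T[t']? := by
  obtain ⟨k, hk⟩ := hd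
  have hk' : t' - t = k * q := by rw [hk, Nat.mul_comm]
  have e : t' = t + k * q := by omega
  rw [e]
  exact perOn_chain h k t ht (by omega)

lemma perOn_sub {T : List α} {l r q1 q2 : ℕ} (hq1 : 0 < q1) (hlt : q1 < q2)
    (hlen : l + q1 + q2 ≤ r + 1) (h1 : PerOn T l r q1) (h2 : PerOn T l r q2) :
    PerOn T l r (q2 - q1) := by
  intro t ht htr
  rcases Nat.lt_or_ge t (l + q1) with hc | hc
  · have e1 : T[t]? = T[t + q2]? := h2 t ht (by omega)
    have e2 : T[t + (q2 - q1)]? = T[t + q2]? := by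
      have h := h1 (t + (q2 - q1)) (by omega) (by omega)
      rw [h]; congr 1; omega
    rw [e1, e2]
  · have e1 : T[t - q1]? = T[t]? := by
      have h := h1 (t - q1) (by omega) (by omega)
      rw [h]; congr 1; omega
    have e2 : T[t - q1]? = T[t + (q2 - q1)]? := by
      have h := h2 (t - q1) (by omega) (by omega)
      rw [h]; congr 1; omega
    rw [← e1, e2]

lemma perOn_gcd_aux (T : List α) :
    ∀ N q1 q2 l r, q1 + q2 ≤ N → 0 < q1 → 0 < q2 → l + q1 + q2 ≤ r + 1 →
      PerOn T l r q1 → PerOn T l r q2 → PerOn T l r (Nat.gcd q1 q2) := by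
  intro N
  induction N with
  | zero => intro q1 q2 l r hN h1 h2 _ _ _; omega
  | succ N ih =>
    intro q1 q2 l r hN hq1 hq2 hlen h1 h2
    rcases lt_trichotomy q1 q2 with hlt | heq | hgt
    · have hper : PerOn T l r (q2 - q1) := perOn_sub hq1 hlt hlen h1 h2
      have hg : Nat.gcd q1 (q2 - q1) = Nat.gcd q1 q2 := Nat.gcd_sub_self_right (le_of_lt hlt)
      have h := ih q1 (q2 - q1) l r (by omega) hq1 (by omega) (by omega) h1 hper
      rwa [hg] at h
    · subst heq; rwa [Nat.gcd_self]
    · have hper : PerOn T l r (q1 - q2) := perOn_sub hq2 hgt (by omega) h2 h1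
      have hg : Nat.gcd q2 (q1 - q2) = Nat.gcd q2 q1 := Nat.gcd_sub_self_right (le_of_lt hgt)
      have h := ih q2 (q1 - q2) l r (by omega) hq2 (by omega) (by omega) h2 hper
      rw [hg, Nat.gcd_comm] at h
      exact h

lemma perOn_gcd {T : List α} {l r q1 q2 : ℕ} (h1 : PerOn T l r q1) (h2 : PerOn T l r q2)
    (hq1 : 0 < q1) (hq2 : 0 < q2) (hlen : l + q1 + q2 ≤ r + 1) :
    PerOn T l r (Nat.gcd q1 q2) :=
  perOn_gcd_aux T (q1 + q2) q1 q2 l r (le_refl _) hq1 hq2 hlen h1 h2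

lemma isPeriodOf_length {S : List α} (hS : S ≠ []) : IsPeriodOf S.length S :=
  ⟨List.length_pos_iff.2 hS, le_refl _, fun _ h => absurd h (by omega)⟩

lemma minPeriod_isPeriodOf {S : List α} (hS : S ≠ []) : IsPeriodOf (minPeriod S) S := by
  have h : sInf {p | IsPeriodOf p S} ∈ {p | IsPeriodOf p S} :=
    Nat.sInf_mem ⟨S.length, isPeriodOf_length hS⟩
  exact h

lemma minPeriod_le {S : List α} {q : ℕ} (h : IsPeriodOf q S) : minPeriod S ≤ q :=
  Nat.sInf_le h

lemma minPeriod_pos {S : List α} (hS : S ≠ []) : 0 < minPeriod S :=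
  (minPeriod_isPeriodOf hS).1

lemma minPeriod_le_length {S : List α} (hS : S ≠ []) : minPeriod S ≤ S.length :=
  (minPeriod_isPeriodOf hS).2.1

lemma frag_length {T : List α} {l r : ℕ} (hr : r < T.length) :
    (frag T l r).length = r + 1 - l := by
  simp only [frag, List.length_take, List.length_drop]
  omega

lemma frag_get? {T : List α} {l r i : ℕ} (h : i < r + 1 - l) :
    (frag T l r)[i]? = T[l + i]? := by
  unfold frag
  rw [List.getElem?_take_of_lt h, List.getElem?_drop]

lemma frag_ne_nil {T : List α} {l r : ℕ} (hlr : l ≤ r) (hr : r < T.length) :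
    frag T l r ≠ [] := by
  intro h
  have hl := frag_length (l := l) hr
  rw [h] at hl
  simp at hl
  omega

lemma perOn_of_minPeriod_frag {T : List α} {l r q : ℕ} (hlr : l ≤ r) (hr : r < T.length)
    (hq : minPeriod (frag T l r) = q) : PerOn T l r q := by
  have hper := minPeriod_isPeriodOf (frag_ne_nil hlr hr)
  rw [hq] at hper
  obtain ⟨hq0, hqle, hcond⟩ := hper
  intro t ht htr
  have hlen := frag_length (l := l) (r := r) hr
  have h1 := hcond (t - l) (by rw [hlen]; omega)
  rw [frag_get? (by omega), frag_get? (by omega)] at h1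
  have e1 : l + (t - l) = t := by omega
  have e2 : l + (t - l + q) = t + q := by omega
  rwa [e1, e2] at h1

lemma isPeriodOf_frag {T : List α} {l r q : ℕ} (h : PerOn T l r q) (hq : 0 < q)
    (hql : q ≤ r + 1 - l) (hr : r < T.length) : IsPeriodOf q (frag T l r) := by
  refine ⟨hq, by rw [frag_length hr]; exact hql, ?_⟩
  intro i hi
  rw [frag_length hr] at hi
  rw [frag_get? (by omega), frag_get? (by omega)]
  have h1 := h (l + i) (by omega) (by omega)
  rwa [← Nat.add_assoc]

lemma perOn_extend {T : List α} {x y A B P n : ℕ}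
    (hP : 0 < P) (hn : 0 < n) (hxA : x ≤ A) (hBy : B ≤ y)
    (hlen : A + P + n ≤ B + 1)
    (hR : PerOn T x y P) (hG : PerOn T A B n) : PerOn T x y n := by
  intro t ht hty
  obtain ⟨t', ht'A, ht'AP, hc1, hc2⟩ :
      ∃ t', A ≤ t' ∧ t' ≤ A + P - 1 ∧ T[t]? = T[t']? ∧
        T[t + n]? = T[t' + n]? := by
    rcases Nat.lt_or_ge t A with hcase | hcase
    · -- t < A : go up by multiples of P
      have hd : 0 < A - t := by omega
      have h1 := Nat.div_add_mod (A - t + P - 1) P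
      have h2 := Nat.mod_lt (A - t + P - 1) hP
      set k := (A - t + P - 1) / P with hk
      rw [Nat.mul_comm] at h1
      have hkey : A - t ≤ k * P ∧ k * P ≤ A - t + P - 1 := by omega
      refine ⟨t + k * P, by omega, by omega, ?_, ?_⟩
      · exact perOn_chain hR k t ht (by omega)
      · have h3 := perOn_chain hR k (t + n) (by omega) (by omega)
        rw [h3]; congr 1; omega
    · -- t ≥ A : go down by multiples of P
      have h1 := Nat.div_add_mod (t - A) P
      have h2 := Nat.mod_lt (t - A) hP
      set k := (t - A) / P with hk
      rw [Nat.mul_comm] at h1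
      set t' := A + (t - A) % P with ht'
      have htt' : t = t' + k * P := by omega
      refine ⟨t', by omega, by omega, ?_, ?_⟩
      · have h3 := perOn_chain hR k t' (by omega) (by omega)
        rw [htt']
        exact h3.symm
      · have h3 := perOn_chain hR k (t' + n) (by omega) (by omega)
        have e : t' + n + k * P = t + n := by omega
        rw [e] at h3
        exact h3.symm
  have h4 : T[t']? = T[t' + n]? := hG t' ht'A (by omega)
  rw [hc1, hc2, h4]

lemma eq_join_replicate :
    ∀ (m : ℕ) (S : List α) (g : ℕ), S.length = m → 0 < g → g ∣ m →
      (∀ i, i + g < m → S[i]? = S[i + g]?) →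
      S = (List.replicate (m / g) (S.take g)).flatten := by
  intro m
  induction m using Nat.strong_induction_on with
  | _ m ih =>
    intro S g hm hg hdvd h
    rcases Nat.eq_zero_or_pos m with h0 | hpos
    · subst h0
      have hS : S = [] := List.length_eq_zero_iff.1 hm
      subst hS
      simp
    · have hgm : g ≤ m := Nat.le_of_dvd hpos hdvd
      rcases eq_or_lt_of_le hgm with heq | hlt
      · have hdiv1 : m / g = 1 := by rw [← heq, Nat.div_self hg]
        rw [hdiv1]
        simp only [List.replicate_one, List.flatten_cons, List.flatten_nil, List.append_nil]
        exact (List.take_of_length_le (by omega)).symm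
      · have h2g : 2 * g ≤ m := by
          obtain ⟨c, hc⟩ := hdvd
          rcases c with _ | c
          · omega
          · rcases c with _ | c
            · simp at hc; omega
            · have hmul := Nat.mul_le_mul (Nat.le_refl g) (show 2 ≤ c + 1 + 1 by omega)
              omega
        have hlen2 : (S.drop g).length = m - g := by rw [List.length_drop, hm]
        have hper2 : ∀ i, i + g < m - g → (S.drop g)[i]? = (S.drop g)[i + g]? := by
          intro i hi
          rw [List.getElem?_drop, List.getElem?_drop]
          have h1 := h (g + i) (by omega)
          have e : g + (i + g) = g + i + g := by omega
          rw [e]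
          exact h1
        have hrec := ih (m - g) (by omega) (S.drop g) g hlen2 hg
          (Nat.dvd_sub hdvd (dvd_refl g)) hper2
        have htake : (S.drop g).take g = S.take g := by
          apply List.ext_getElem?
          intro i
          rcases Nat.lt_or_ge i g with hi | hi
          · rw [List.getElem?_take_of_lt hi, List.getElem?_take_of_lt hi, List.getElem?_drop]
            have h1 := h i (by omega)
            have e : g + i = i + g := by omega
            rw [e]
            exact h1.symm
          · rw [List.getElem?_eq_none_iff.2 (le_trans (List.length_take_le _ _) hi),
              List.getElem?_eq_none_iff.2 (le_trans (List.length_take_le _ _) hi)]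
        rw [htake] at hrec
        have hdivp : (m - g) / g + 1 = m / g := by
          obtain ⟨c, hc⟩ := hdvd
          have hc1 : 1 ≤ c := by
            rcases Nat.eq_zero_or_pos c with h' | h'
            · subst h'; simp at hc; omega
            · exact h'
          have e : m - g = g * (c - 1) := by
            rcases c with _ | c
            · omega
            · rw [hc, Nat.succ_sub_one, Nat.mul_succ]
              omega
          rw [e, hc, Nat.mul_div_cancel_left _ hg, Nat.mul_div_cancel_left _ hg]
          omega
        calc S = S.take g ++ S.drop g := (List.take_append_drop g S).symm
          _ = S.take g ++ (List.replicate ((m - g) / g) (S.take g)).flatten := by rw [← hrec]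
          _ = (List.replicate ((m - g) / g + 1) (S.take g)).flatten := by
              simp only [List.flatten, List.replicate_succ, List.flatten_cons]
          _ = (List.replicate (m / g) (S.take g)).flatten := by rw [hdivp]

lemma minPeriod_square {U : List α} (hU : U ≠ []) (hprim : Primitive U) :
    minPeriod (U ++ U) = U.length := by
  have hn : 0 < U.length := List.length_pos_iff.2 hU
  have hWlen : (U ++ U).length = 2 * U.length := by
    rw [List.length_append]; omega
  have hperW : ∀ i, i + U.length < 2 * U.length →
      (U ++ U)[i]? = (U ++ U)[i + U.length]? := by
    intro i hi
    rw [List.getElem?_append_left (by omega : i < U.length),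
      List.getElem?_append_right (by omega : U.length ≤ i + U.length)]
    congr 1
    omega
  have hperWp : IsPeriodOf U.length (U ++ U) := by
    refine ⟨hn, by rw [hWlen]; omega, ?_⟩
    intro i hi
    rw [hWlen] at hi
    exact hperW i hi
  have hle : minPeriod (U ++ U) ≤ U.length := minPeriod_le hperWp
  rcases eq_or_lt_of_le hle with heq | hlt
  · exact heq
  · exfalso
    have hWne : (U ++ U) ≠ [] := by
      intro h
      exact hU (List.append_eq_nil_iff.1 h).1
    have hperR := minPeriod_isPeriodOf hWne
    have hr0 : 0 < minPeriod (U ++ U) := hperR.1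
    have pr : PerOn (U ++ U) 0 (2 * U.length - 1) (minPeriod (U ++ U)) := by
      intro t _ htr
      exact hperR.2.2 t (by rw [hWlen]; omega)
    have pn : PerOn (U ++ U) 0 (2 * U.length - 1) U.length := by
      intro t _ htr
      exact hperW t (by omega)
    have pg := perOn_gcd pr pn hr0 hn (by omega)
    have hg0 : 0 < Nat.gcd (minPeriod (U ++ U)) U.length :=
      Nat.gcd_pos_of_pos_right _ hn
    have hgd : Nat.gcd (minPeriod (U ++ U)) U.length ∣ U.length := Nat.gcd_dvd_right _ _
    have hgr : Nat.gcd (minPeriod (U ++ U)) U.length ≤ minPeriod (U ++ U) :=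
      Nat.le_of_dvd hr0 (Nat.gcd_dvd_left _ _)
    set g := Nat.gcd (minPeriod (U ++ U)) U.length with hgdef
    have hUper : ∀ i, i + g < U.length → U[i]? = U[i + g]? := by
      intro i hi
      have h1 := pg i (Nat.zero_le _) (by omega)
      rwa [List.getElem?_append_left (by omega : i < U.length),
        List.getElem?_append_left (by omega : i + g < U.length)] at h1
    have hrep := eq_join_replicate U.length U g rfl hg0 hgd hUper
    have hk := hprim.2 (U.take g) (U.length / g) hrep
    have hmul : g * (U.length / g) = U.length := Nat.mul_div_cancel' hgd
    rw [hk, Nat.mul_one] at hmul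
    omega

end Aux


lemma main_aux (T U : List α) (p a b a' b' x y s : ℕ)
    (hU : U ≠ []) (hprim : Primitive U)
    (hab : a < a') (hr : IsRun T a b) (hr' : IsRun T a' b')
    (hnb : Neighboring a b a' b')
    (hq : minPeriod (frag T a b) = p) (hq' : minPeriod (frag T a' b') = p)
    (hl : IsLayer T a b a' b' x y)
    (ho : OccursAt T s (U ++ U))
    (hin1 : max x a ≤ s) (hin2 : s + 2 * U.length ≤ min y b' + 1)
    (hg : minPeriod (U ++ U) = minPeriod (frag T (max x a) (min y b'))) :
    sInf {i : ℕ | p < minPeriod ((U ++ U).take (i + 1))} = b + 1 - s ∧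
    sSup {j : ℕ | j < 2 * U.length ∧ p < minPeriod ((U ++ U).drop j)} = a' - s - 1 ∧
    s < a' ∧ a' ≤ s + U.length ∧ s + U.length ≤ b + 1 ∧ b + 1 + 1 ≤ s + 2 * U.length ∧
    b < b' ∧ a' ≤ b + 1 ∧ 4 * p ≤ U.length ∧ 0 < p ∧
    ((U ++ U).drop (b + 1 - s - p)).take p = (T.drop (b + 1 - p)).take p ∧
    ((U ++ U).drop (a' - s)).take p = (T.drop a').take p := by
  obtain ⟨hab', hb'T, hr'len, hr'left, hr'right⟩ := hr'
  obtain ⟨habF, hbT, hrlen, hrleft, hrright⟩ := hr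
  obtain ⟨hrR, hsub4, hsubp, hlay2, hlayper⟩ := hl
  obtain ⟨hxy, hyT, hRlen, _, _⟩ := hrR
  rw [hq] at hsubp hrright hrleft
  rw [hq'] at hr'left hr'right hr'len
  set n := U.length with hn
  have hn0 : 0 < n := List.length_pos_iff.2 hU
  set W := U ++ U with hWdef
  have hWlen : W.length = 2 * n := by rw [hWdef, List.length_append]; omega
  set A := max x a with hA
  set B := min y b' with hB
  have hxA : x ≤ A := le_max_left _ _
  have haA : a ≤ A := le_max_right _ _
  have hBy : B ≤ y := min_le_left _ _
  have hBb' : B ≤ b' := min_le_right _ _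
  have hsA : A ≤ s := hin1
  have hsB : s + 2 * n ≤ B + 1 := hin2
  have hsT : s + 2 * n ≤ T.length := by
    have h1 := ho.1
    rwa [hWlen] at h1
  have hWne : W ≠ [] := by
    intro h
    exact hU (List.append_eq_nil_iff.1 (hWdef ▸ h)).1
  have hWget : ∀ k, k < 2 * n → W[k]? = T[s + k]? := by
    intro k hk
    conv_lhs => rw [← ho.2]
    rw [hWlen, List.getElem?_take_of_lt hk, List.getElem?_drop]
  -- basic period facts
  have hp0 : 0 < p := by
    rw [← hq]
    exact minPeriod_pos (frag_ne_nil habF hbT)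
  have hPF : PerOn T a b p := perOn_of_minPeriod_frag habF hbT hq
  have hPF' : PerOn T a' b' p := perOn_of_minPeriod_frag hab' hb'T hq'
  set P := minPeriod (frag T x y) with hPdef
  have hP0 : 0 < P := minPeriod_pos (frag_ne_nil hxy hyT)
  have hPR : PerOn T x y P := perOn_of_minPeriod_frag hxy hyT hPdef.symm
  have h4p : 4 * p ≤ P := by rw [hsubp] at hsub4; exact hsub4
  have hABP : A + 2 * P ≤ B + 1 := by
    have h1 : 2 * P ≤ B + 1 - A := hlay2
    omega
  have hAB : A ≤ B := by omega
  have hBT : B < T.length := lt_of_le_of_lt hBy hyT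
  have hWn : minPeriod W = n := minPeriod_square hU hprim
  have hGn : minPeriod (frag T A B) = n := by rw [← hg]; exact hWn
  have hPG : PerOn T A B n := perOn_of_minPeriod_frag hAB hBT hGn
  have hnP : n ≤ P := by
    have h1 : minPeriod (frag T A B) ≤ P := minPeriod_le hlayper
    rwa [hGn] at h1
  have hPn : P = n := by
    have hext : PerOn T x y n := perOn_extend hP0 hn0 hxA hBy (by omega) hPR hPG
    have h1 : IsPeriodOf n (frag T x y) := isPeriodOf_frag hext hn0 (by omega) hyT
    have h2 : P ≤ n := minPeriod_le h1
    omega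
  have h4pn : 4 * p ≤ n := by omega
  -- W has period n as a window of T
  have hperWn : PerOn T s (s + 2 * n - 1) n := by
    intro t ht htr
    have hWper := minPeriod_isPeriodOf hWne
    rw [hWn] at hWper
    have h1 := hWper.2.2 (t - s) (by rw [hWlen]; omega)
    rw [hWget _ (by omega), hWget _ (by omega)] at h1
    have e1 : s + (t - s) = t := by omega
    have e2 : s + (t - s + n) = t + n := by omega
    rwa [e1, e2] at h1
  -- the boundary window [a', b+1] is inside W
  have hbu : b + 1 < s + 2 * n := by
    by_contra hcon
    push_neg at hcon
    have hpW : IsPeriodOf p W := by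
      refine ⟨hp0, by rw [hWlen]; omega, ?_⟩
      intro i hi
      rw [hWlen] at hi
      rw [hWget i (by omega), hWget (i + p) (by omega)]
      have h1 := hPF (s + i) (by omega) (by omega)
      rwa [← Nat.add_assoc]
    have h1 := minPeriod_le hpW
    rw [hWn] at h1
    omega
  have hsa' : s < a' := by
    by_contra hcon
    push_neg at hcon
    have hpW : IsPeriodOf p W := by
      refine ⟨hp0, by rw [hWlen]; omega, ?_⟩
      intro i hi
      rw [hWlen] at hi
      rw [hWget i (by omega), hWget (i + p) (by omega)]
      have h1 := hPF' (s + i) (by omega) (by omega)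
      rwa [← Nat.add_assoc]
    have h1 := minPeriod_le hpW
    rw [hWn] at h1
    omega
  have ha'b : a' ≤ b + 1 := hnb.2
  have hbTm : b + 1 < T.length := by omega
  have hmisF : T[b + 1]? ≠ T[b + 1 - p]? := by
    rcases hrright with h0 | hne
    · omega
    · exact hne
  have hmisF' : T[a' - 1]? ≠ T[a' - 1 + p]? := by
    rcases hr'left with h0 | hne
    · omega
    · exact hne
  -- the boundary window contains the middle position s + n
  have hmid1 : s + n ≤ b + 1 := by
    by_contra hcon
    push_neg at hcon
    have key : ∀ t, s ≤ t → t + p + 1 ≤ s + n → T[t]? = T[t + p]? := by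
      intro t ht htp
      have e1 : T[t]? = T[t + n]? := hperWn t ht (by omega)
      have e2 : T[t + p]? = T[t + p + n]? := hperWn (t + p) (by omega) (by omega)
      have e3 : T[t + n]? = T[t + n + p]? := hPF' (t + n) (by omega) (by omega)
      have e4 : t + n + p = t + p + n := by omega
      rw [e1, e3, e4, ← e2]
    rcases Nat.lt_or_ge (b + 1) (s + p) with hc | hc
    · exact hmisF' (key (a' - 1) (by omega) (by omega))
    · apply hmisF
      have h1 := key (b + 1 - p) (by omega) (by omega)
      have e : b + 1 - p + p = b + 1 := by omega
      rw [e] at h1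
      exact h1.symm
  have hmid2 : a' ≤ s + n := by
    by_contra hcon
    push_neg at hcon
    have key : ∀ t, s + n ≤ t → t + p + 1 ≤ s + 2 * n → T[t]? = T[t + p]? := by
      intro t ht htp
      have e1 : T[t - n]? = T[t]? := by
        have h1 := hperWn (t - n) (by omega) (by omega)
        rw [h1]; congr 1; omega
      have e2 : T[t - n + p]? = T[t + p]? := by
        have h1 := hperWn (t - n + p) (by omega) (by omega)
        rw [h1]; congr 1; omega
      have e3 : T[t - n]? = T[t - n + p]? := hPF (t - n) (by omega) (by omega)
      rw [← e1, e3, e2]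
    rcases Nat.lt_or_ge (b + 1) (s + n + p) with hc | hc
    · exact hmisF' (key (a' - 1) (by omega) (by omega))
    · apply hmisF
      have h1 := key (b + 1 - p) (by omega) (by omega)
      have e : b + 1 - p + p = b + 1 := by omega
      rw [e] at h1
      exact h1.symm
  have hbb' : b < b' := by omega
  -- characterization of i
  have hprefix_small : ∀ L, 0 < L → L ≤ b + 1 - s → minPeriod (W.take L) ≤ p := by
    intro L hL0 hLβ
    have hLlen : (W.take L).length = L := by rw [List.length_take, hWlen]; omega
    have hne : W.take L ≠ [] := by
      intro h
      rw [h] at hLlen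
      simp at hLlen
      omega
    rcases le_or_gt L p with hc | hc
    · have h1 := minPeriod_le_length hne
      omega
    · apply minPeriod_le
      refine ⟨hp0, by rw [hLlen]; omega, ?_⟩
      intro i hi
      rw [hLlen] at hi
      rw [List.getElem?_take_of_lt (by omega), List.getElem?_take_of_lt (by omega)]
      rw [hWget i (by omega), hWget (i + p) (by omega)]
      have h1 := hPF (s + i) (by omega) (by omega)
      rwa [← Nat.add_assoc]
  have hSmem : (b + 1 - s) ∈ {i : ℕ | p < minPeriod (W.take (i + 1))} := by
    show p < minPeriod (W.take (b + 1 - s + 1))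
    by_contra hcon
    push_neg at hcon
    have hLlen : (W.take (b + 1 - s + 1)).length = b + 1 - s + 1 := by
      rw [List.length_take, hWlen]; omega
    have hne : W.take (b + 1 - s + 1) ≠ [] := by
      intro h
      rw [h] at hLlen
      simp at hLlen
    have hr0 : 0 < minPeriod (W.take (b + 1 - s + 1)) := minPeriod_pos hne
    have hperL := minPeriod_isPeriodOf hne
    set r := minPeriod (W.take (b + 1 - s + 1)) with hrdef
    have hPr : PerOn T s (b + 1) r := by
      intro t ht htr
      have h1 := hperL.2.2 (t - s) (by rw [hLlen]; omega)
      rw [List.getElem?_take_of_lt (by omega), List.getElem?_take_of_lt (by omega)] at h1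
      rw [hWget _ (by omega), hWget _ (by omega)] at h1
      have e1 : s + (t - s) = t := by omega
      have e2 : s + (t - s + r) = t + r := by omega
      rwa [e1, e2] at h1
    have hPrb : PerOn T s b r := perOn_mono hPr (le_refl _) (by omega)
    have hPpb : PerOn T s b p := perOn_mono hPF (by omega) (le_refl _)
    have hPg : PerOn T s b (Nat.gcd r p) := perOn_gcd hPrb hPpb hr0 hp0 (by omega)
    have hgd : Nat.gcd r p ∣ p - r := Nat.dvd_sub (Nat.gcd_dvd_right r p) (Nat.gcd_dvd_left r p)
    have e1 : T[b + 1 - r]? = T[b + 1]? := by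
      have h1 := hPr (b + 1 - r) (by omega) (by omega)
      rw [h1]; congr 1; omega
    have e2 : T[b + 1 - p]? = T[b + 1 - r]? :=
      perOn_eq_of hPg (by omega) (by omega) (by omega)
        (by
          have e : b + 1 - r - (b + 1 - p) = p - r := by omega
          rw [e]; exact hgd)
    exact hmisF ((e2.trans e1).symm)
  have hi_eq : sInf {i : ℕ | p < minPeriod (W.take (i + 1))} = b + 1 - s := by
    apply _root_.le_antisymm (Nat.sInf_le hSmem)
    by_contra hcon
    push_neg at hcon
    have hmem : sInf {i : ℕ | p < minPeriod (W.take (i + 1))} ∈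
        {i : ℕ | p < minPeriod (W.take (i + 1))} := Nat.sInf_mem ⟨_, hSmem⟩
    have hmem' : p < minPeriod (W.take (sInf {i : ℕ | p < minPeriod (W.take (i + 1))} + 1)) := hmem
    have h1 := hprefix_small (sInf {i : ℕ | p < minPeriod (W.take (i + 1))} + 1)
      (by omega) (by omega)
    omega
  -- characterization of j
  have hsuffix_small : ∀ j', a' - s ≤ j' → j' < 2 * n → minPeriod (W.drop j') ≤ p := by
    intro j' hj1 hj2
    have hdlen : (W.drop j').length = 2 * n - j' := by rw [List.length_drop, hWlen]
    have hne : W.drop j' ≠ [] := by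
      intro h
      rw [h] at hdlen
      simp at hdlen
      omega
    rcases le_or_gt (2 * n - j') p with hc | hc
    · have h1 := minPeriod_le_length hne
      omega
    · apply minPeriod_le
      refine ⟨hp0, by rw [hdlen]; omega, ?_⟩
      intro i hi
      rw [hdlen] at hi
      rw [List.getElem?_drop, List.getElem?_drop]
      rw [hWget _ (by omega), hWget _ (by omega)]
      have h1 := hPF' (s + (j' + i)) (by omega) (by omega)
      have e : s + (j' + (i + p)) = s + (j' + i) + p := by omega
      rw [e]
      exact h1
  have hSmem' : (a' - s - 1) ∈ {j : ℕ | j < 2 * n ∧ p < minPeriod (W.drop j)} := by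
    refine ⟨by omega, ?_⟩
    by_contra hcon
    push_neg at hcon
    have hdlen : (W.drop (a' - s - 1)).length = 2 * n - (a' - s - 1) := by
      rw [List.length_drop, hWlen]
    have hne : W.drop (a' - s - 1) ≠ [] := by
      intro h
      rw [h] at hdlen
      simp at hdlen
      omega
    have hr0 : 0 < minPeriod (W.drop (a' - s - 1)) := minPeriod_pos hne
    have hperD := minPeriod_isPeriodOf hne
    set r := minPeriod (W.drop (a' - s - 1)) with hrdef
    have hPr : PerOn T (a' - 1) (s + 2 * n - 1) r := by
      intro t ht htr
      have h1 := hperD.2.2 (t - (a' - 1)) (by rw [hdlen]; omega)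
      rw [List.getElem?_drop, List.getElem?_drop] at h1
      rw [hWget _ (by omega), hWget _ (by omega)] at h1
      have e1 : s + (a' - s - 1 + (t - (a' - 1))) = t := by omega
      have e2 : s + (a' - s - 1 + (t - (a' - 1) + r)) = t + r := by omega
      rwa [e1, e2] at h1
    have hPra : PerOn T a' (s + 2 * n - 1) r := perOn_mono hPr (by omega) (le_refl _)
    have hPpa : PerOn T a' (s + 2 * n - 1) p := perOn_mono hPF' (le_refl _) (by omega)
    have hPg : PerOn T a' (s + 2 * n - 1) (Nat.gcd r p) :=
      perOn_gcd hPra hPpa hr0 hp0 (by omega)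
    have hgd : Nat.gcd r p ∣ p - r := Nat.dvd_sub (Nat.gcd_dvd_right r p) (Nat.gcd_dvd_left r p)
    have e1 : T[a' - 1]? = T[a' - 1 + r]? := hPr (a' - 1) (le_refl _) (by omega)
    have e2 : T[a' - 1 + r]? = T[a' - 1 + p]? :=
      perOn_eq_of hPg (by omega) (by omega) (by omega)
        (by
          have e : a' - 1 + p - (a' - 1 + r) = p - r := by omega
          rw [e]; exact hgd)
    exact hmisF' (e1.trans e2)
  have hj_eq : sSup {j : ℕ | j < 2 * n ∧ p < minPeriod (W.drop j)} = a' - s - 1 := by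
    have hbdd : BddAbove {j : ℕ | j < 2 * n ∧ p < minPeriod (W.drop j)} :=
      ⟨2 * n, fun k hk => le_of_lt hk.1⟩
    apply _root_.le_antisymm
    · apply csSup_le ⟨_, hSmem'⟩
      intro k hk
      by_contra hcon
      push_neg at hcon
      have h1 := hsuffix_small k (by omega) hk.1
      have h2 := hk.2
      omega
    · exact le_csSup hbdd hSmem'
  -- the fragments
  have hfrag1 : (W.drop (b + 1 - s - p)).take p = (T.drop (b + 1 - p)).take p := by
    apply List.ext_getElem?
    intro m
    rcases Nat.lt_or_ge m p with hm | hm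
    · rw [List.getElem?_take_of_lt hm, List.getElem?_take_of_lt hm, List.getElem?_drop, List.getElem?_drop]
      rw [hWget _ (by omega)]
      congr 1
      omega
    · rw [List.getElem?_eq_none_iff.2 (le_trans (List.length_take_le _ _) hm),
        List.getElem?_eq_none_iff.2 (le_trans (List.length_take_le _ _) hm)]
  have hfrag2 : (W.drop (a' - s)).take p = (T.drop a').take p := by
    apply List.ext_getElem?
    intro m
    rcases Nat.lt_or_ge m p with hm | hm
    · rw [List.getElem?_take_of_lt hm, List.getElem?_take_of_lt hm, List.getElem?_drop, List.getElem?_drop]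
      rw [hWget _ (by omega)]
      congr 1
      omega
    · rw [List.getElem?_eq_none_iff.2 (le_trans (List.length_take_le _ _) hm),
        List.getElem?_eq_none_iff.2 (le_trans (List.length_take_le _ _) hm)]
  exact ⟨hi_eq, hj_eq, hsa', hmid2, hmid1, by omega, hbb', ha'b, h4pn, hp0, hfrag1, hfrag2⟩


/-- For a special square `U²` generated by (layers of) two pyramids of runs of
period `p`, with `i` the smallest position with `per(U²[0..i]) > p` and `j`
the largest position with `per(U²[j..)) > p`, one has `j < |U| ≤ i` and the
triple `(i-j-1, U²[i-p..i-1], U²[j+1..j+p])` equals the type of each pyramid;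
consequently pyramids of different types generate disjoint sets of special
squares. -/
theorem special_square_determines_type [LinearOrder α] (T U : List α)
    (p : ℕ)
    (a₁ b₁ a₁' b₁' x₁ y₁ s₁ : ℕ) (lam₁ : List α)
    (a₂ b₂ a₂' b₂' x₂ y₂ s₂ : ℕ) (lam₂ : List α)
    (hU : U ≠ []) (hprim : Primitive U) (hhp : 4 * minPeriod U ≤ U.length)
    -- pyramid 1 and an occurrence of U² generated by a layer intersection
    (hab₁ : a₁ < a₁') (hr₁ : IsRun T a₁ b₁) (hr₁' : IsRun T a₁' b₁')
    (hnb₁ : Neighboring a₁ b₁ a₁' b₁')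
    (hq₁ : minPeriod (frag T a₁ b₁) = p) (hq₁' : minPeriod (frag T a₁' b₁') = p)
    (hlam₁ : LyndonRootOf (frag T a₁ b₁) lam₁ ∧ LyndonRootOf (frag T a₁' b₁') lam₁)
    (hl₁ : IsLayer T a₁ b₁ a₁' b₁' x₁ y₁)
    (ho₁ : OccursAt T s₁ (U ++ U))
    (hin₁ : max x₁ a₁ ≤ s₁ ∧ s₁ + 2 * U.length ≤ min y₁ b₁' + 1)
    (hg₁ : minPeriod (U ++ U) = minPeriod (frag T (max x₁ a₁) (min y₁ b₁')))
    -- pyramid 2 and an occurrence of U² generated by a layer intersection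
    (hab₂ : a₂ < a₂') (hr₂ : IsRun T a₂ b₂) (hr₂' : IsRun T a₂' b₂')
    (hnb₂ : Neighboring a₂ b₂ a₂' b₂')
    (hq₂ : minPeriod (frag T a₂ b₂) = p) (hq₂' : minPeriod (frag T a₂' b₂') = p)
    (hlam₂ : LyndonRootOf (frag T a₂ b₂) lam₂ ∧ LyndonRootOf (frag T a₂' b₂') lam₂)
    (hl₂ : IsLayer T a₂ b₂ a₂' b₂' x₂ y₂)
    (ho₂ : OccursAt T s₂ (U ++ U))
    (hin₂ : max x₂ a₂ ≤ s₂ ∧ s₂ + 2 * U.length ≤ min y₂ b₂' + 1)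
    (hg₂ : minPeriod (U ++ U) = minPeriod (frag T (max x₂ a₂) (min y₂ b₂'))) :
    -- with i and j defined from U² and p:
    letI i : ℕ := sInf {i : ℕ | p < minPeriod ((U ++ U).take (i + 1))}
    letI j : ℕ := sSup {j : ℕ | j < 2 * U.length ∧ p < minPeriod ((U ++ U).drop j)}
    j < U.length ∧ U.length ≤ i ∧
    -- the triple equals the type of pyramid 1
    (i - (j + 1) = min b₁ b₁' + 1 - max a₁ a₁' ∧
      ((U ++ U).drop (i - p)).take p = (T.drop (b₁ + 1 - p)).take p ∧
      ((U ++ U).drop (j + 1)).take p = (T.drop a₁').take p) ∧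
    -- and also equals the type of pyramid 2 (hence the two types coincide)
    (i - (j + 1) = min b₂ b₂' + 1 - max a₂ a₂' ∧
      ((U ++ U).drop (i - p)).take p = (T.drop (b₂ + 1 - p)).take p ∧
      ((U ++ U).drop (j + 1)).take p = (T.drop a₂').take p) := by
  obtain ⟨hi1, hj1, hsa1, hm1a, hm1b, hbu1, hbb1, hab1', h4p1, hp01, hf11, hf12⟩ :=
    main_aux T U p a₁ b₁ a₁' b₁' x₁ y₁ s₁ hU hprim hab₁ hr₁ hr₁' hnb₁ hq₁ hq₁' hl₁ ho₁
      hin₁.1 hin₁.2 hg₁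
  obtain ⟨hi2, hj2, hsa2, hm2a, hm2b, hbu2, hbb2, hab2', h4p2, _, hf21, hf22⟩ :=
    main_aux T U p a₂ b₂ a₂' b₂' x₂ y₂ s₂ hU hprim hab₂ hr₂ hr₂' hnb₂ hq₂ hq₂' hl₂ ho₂
      hin₂.1 hin₂.2 hg₂
  refine ⟨?_, ?_, ⟨?_, ?_, ?_⟩, ⟨?_, ?_, ?_⟩⟩
  · rw [hj1]; omega
  · rw [hi1]; omega
  · rw [hi1, hj1, min_eq_left (le_of_lt hbb1), max_eq_right (le_of_lt hab₁)]
    omega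
  · rw [hi1]
    exact hf11
  · rw [hj1]
    have e : a₁' - s₁ - 1 + 1 = a₁' - s₁ := by omega
    rw [e]
    exact hf12
  · rw [hi2, hj2, min_eq_left (le_of_lt hbb2), max_eq_right (le_of_lt hab₂)]
    omega
  · rw [hi2]
    exact hf21
  · rw [hj2]
    have e : a₂' - s₂ - 1 + 1 = a₂' - s₂ := by omega
    rw [e]
    exact hf22
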